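/- For the threshold CRD with reactions X_i → Y^L_{w_i} and Y^L_p + Y^?_q → (the appropriate clipped-sum products as defined), the function I(c) = Σ_i w_i·c(X_i) + Σ_{p=-s}^{s} p·c(Y^L_p) + Σ_{q=-s}^{s} q·c(Y^F_q) (an integer) is invariant under all forward and reverse reaction applications. -/

import Mathlib

section
variable (k : ℕ)

/-- Species: `Sum.inl i` is input `Xᵢ`; `Sum.inr (false, p)` is `Yᴸ_p`;
`Sum.inr (true, q)` is `Yᶠ_q`. -/
abbrev TSp (k : ℕ) := Fin k ⊕ (Bool × ℤ)

def single (x : TSp k) : TSp k → ℕ := fun t => if t = x then 1 else 0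

/-- The cutoff `s = max(|w₁|,...,|w_k|,|t|) + 1`. -/
def cutoff (w : Fin k → ℤ) (t : ℤ) : ℤ :=
  (((Finset.univ.sup fun i => (w i).natAbs) ⊔ t.natAbs : ℕ) : ℤ) + 1

/-- Products of the reaction `Yᴸ_p + Y?_q → ...` with clipping at `±s`. -/
def clip (s p q : ℤ) : TSp k → ℕ :=
  if p + q < -s then
    fun l => single k (Sum.inr (false, -s)) l + single k (Sum.inr (true, p + q + s)) l
  else if s < p + q then
    fun l => single k (Sum.inr (false, s)) l + single k (Sum.inr (true, p + q - s)) l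
  else single k (Sum.inr (false, p + q))

/-- Reactions of the threshold CRD. -/
def Rthr (w : Fin k → ℤ) (t : ℤ) : Set ((TSp k → ℕ) × (TSp k → ℕ)) :=
  {r | (∃ i : Fin k, r = (single k (Sum.inl i), single k (Sum.inr (false, w i)))) ∨
       (∃ p q : ℤ, ∃ b : Bool, p ∈ Finset.Icc (-(cutoff k w t)) (cutoff k w t) ∧
          q ∈ Finset.Icc (-(cutoff k w t)) (cutoff k w t) ∧
          r = (fun l => single k (Sum.inr (false, p)) l + single k (Sum.inr (b, q)) l,
               clip k (cutoff k w t) p q))}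

def BiStep (R : Set ((TSp k → ℕ) × (TSp k → ℕ))) (x y : TSp k → ℕ) : Prop :=
  ∃ r ∈ R, ((∀ l, r.1 l ≤ x l) ∧ y = fun l => x l - r.1 l + r.2 l) ∨
           ((∀ l, r.2 l ≤ x l) ∧ y = fun l => x l - r.2 l + r.1 l)

/-- The linear invariant of the threshold CRD. -/
noncomputable def Ithr (w : Fin k → ℤ) (t : ℤ) (c : TSp k → ℕ) : ℤ :=
  (∑ i : Fin k, w i * (c (Sum.inl i) : ℤ)) +
  (∑ p ∈ Finset.Icc (-(cutoff k w t)) (cutoff k w t), p * (c (Sum.inr (false, p)) : ℤ)) +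
  (∑ q ∈ Finset.Icc (-(cutoff k w t)) (cutoff k w t), q * (c (Sum.inr (true, q)) : ℤ))

lemma Ithr_lin (w : Fin k → ℤ) (t : ℤ) (x r₁ r₂ : TSp k → ℕ) (h : ∀ l, r₁ l ≤ x l) :
    Ithr k w t (fun l => x l - r₁ l + r₂ l)
      = Ithr k w t x - Ithr k w t r₁ + Ithr k w t r₂ := by
  have hc : ∀ l, ((x l - r₁ l + r₂ l : ℕ) : ℤ) = (x l : ℤ) - r₁ l + r₂ l := by
    intro l; push_cast [h l]; ring
  simp only [Ithr, hc, mul_sub, mul_add, Finset.sum_add_distrib, Finset.sum_sub_distrib]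
  ring

lemma Ithr_add (w : Fin k → ℤ) (t : ℤ) (a b : TSp k → ℕ) :
    Ithr k w t (fun l => a l + b l) = Ithr k w t a + Ithr k w t b := by
  simp only [Ithr, Nat.cast_add, mul_add, Finset.sum_add_distrib]
  ring

lemma Ithr_single_inl (w : Fin k → ℤ) (t : ℤ) (i : Fin k) :
    Ithr k w t (single k (Sum.inl i)) = w i := by
  simp [Ithr, single, Finset.sum_ite_eq']

lemma Ithr_single_inr (w : Fin k → ℤ) (t : ℤ) (b : Bool) (p : ℤ)
    (hp : p ∈ Finset.Icc (-(cutoff k w t)) (cutoff k w t)) :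
    Ithr k w t (single k (Sum.inr (b, p))) = p := by
  cases b <;> simp [Ithr, single, Finset.sum_ite_eq', hp, Prod.ext_iff]

lemma wi_mem (w : Fin k → ℤ) (t : ℤ) (i : Fin k) :
    w i ∈ Finset.Icc (-(cutoff k w t)) (cutoff k w t) := by
  have h1 : ((w i).natAbs : ℤ) ≤ (((Finset.univ.sup fun i => (w i).natAbs) ⊔ t.natAbs : ℕ) : ℤ) := by
    have : (w i).natAbs ≤ (Finset.univ.sup fun i => (w i).natAbs) ⊔ t.natAbs :=
      le_trans (Finset.le_sup (f := fun i => (w i).natAbs) (Finset.mem_univ i)) le_sup_left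
    exact_mod_cast this
  have h2 : |w i| ≤ (((Finset.univ.sup fun i => (w i).natAbs) ⊔ t.natAbs : ℕ) : ℤ) := by
    rw [Int.abs_eq_natAbs]; exact h1
  obtain ⟨ha, hb⟩ := abs_le.mp h2
  simp only [Finset.mem_Icc, cutoff]
  constructor <;> linarith

lemma Ithr_clip (w : Fin k → ℤ) (t : ℤ) (p q : ℤ)
    (hp : p ∈ Finset.Icc (-(cutoff k w t)) (cutoff k w t))
    (hq : q ∈ Finset.Icc (-(cutoff k w t)) (cutoff k w t)) :
    Ithr k w t (clip k (cutoff k w t) p q) = p + q := by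
  set s := cutoff k w t with hs
  have hs1 : (1 : ℤ) ≤ s := by
    have : (0:ℤ) ≤ (((Finset.univ.sup fun i => (w i).natAbs) ⊔ t.natAbs : ℕ) : ℤ) := Int.natCast_nonneg _
    simp only [cutoff, hs]
    linarith
  simp only [Finset.mem_Icc] at hp hq
  unfold clip
  by_cases h1 : p + q < -s
  · rw [if_pos h1]
    rw [Ithr_add, Ithr_single_inr, Ithr_single_inr]
    · ring
    · simp only [Finset.mem_Icc]; omega
    · simp only [Finset.mem_Icc]; omega
  · rw [if_neg h1]
    by_cases h2 : s < p + q
    · rw [if_pos h2]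
      rw [Ithr_add, Ithr_single_inr, Ithr_single_inr]
      · ring
      · simp only [Finset.mem_Icc]; omega
      · simp only [Finset.mem_Icc]; omega
    · rw [if_neg h2]
      rw [Ithr_single_inr]
      simp only [Finset.mem_Icc]; omega

lemma Ithr_reaction (w : Fin k → ℤ) (t : ℤ) (r : (TSp k → ℕ) × (TSp k → ℕ))
    (hr : r ∈ Rthr k w t) : Ithr k w t r.1 = Ithr k w t r.2 := by
  rcases hr with ⟨i, rfl⟩ | ⟨p, q, b, hp, hq, rfl⟩
  · rw [Ithr_single_inl, Ithr_single_inr]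
    exact wi_mem k w t i
  · rw [Ithr_add, Ithr_single_inr _ _ _ _ _ hp, Ithr_single_inr _ _ _ _ _ hq,
      Ithr_clip _ _ _ _ _ hp hq]

/-- the invariant is preserved by all forward and reverse applications. -/
theorem threshold_invariant (hk : 1 ≤ k) (w : Fin k → ℤ) (t : ℤ)
    (x y : TSp k → ℕ) (h : BiStep k (Rthr k w t) x y) :
    Ithr k w t y = Ithr k w t x := by
  obtain ⟨r, hr, ⟨hle, rfl⟩ | ⟨hle, rfl⟩⟩ := h
  · rw [Ithr_lin k w t x r.1 r.2 hle, Ithr_reaction k w t r hr]; ring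
  · rw [Ithr_lin k w t x r.2 r.1 hle, Ithr_reaction k w t r hr]; ring

end
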